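/- The Matching Best Fit algorithm is monotone: for any finite sequence of items with sizes in (0,1], removing one item does not increase the number of bins opened by Matching Best Fit. -/

import Mathlib

/-- One step of Matching Best Fit.  The state is the list of sizes of the open bins,
each of which contains a single large item, together with the number of bins opened
so far.  A large item (size `> 1/2`) opens a new bin; a small item is placed into the
fullest open bin (the one with the largest large item) into which it fits, closing
that bin, and otherwise opens a new bin that is immediately closed. -/
noncomputable def mbfStep (s : List ℝ × ℕ) (x : ℝ) : List ℝ × ℕ :=
  if 1 / 2 < x then (x :: s.1, s.2 + 1)
  else
    match (s.1.filter (fun y => decide (y + x ≤ 1))).max? with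
    | some m => (s.1.erase m, s.2)
    | none => (s.1, s.2 + 1)

/-- The number of bins Matching Best Fit opens on the sequence `l`. -/
noncomputable def mbfCost (l : List ℝ) : ℕ := (l.foldl mbfStep ([], 0)).2

/- Auxiliary lemmas -/
section Aux
open List

private lemma rmax_iff {l : List ℝ} {m : ℝ} :
    l.max? = some m ↔ m ∈ l ∧ ∀ b ∈ l, b ≤ m :=
  List.max?_eq_some_iff_legacy (anti := ⟨fun _ _ h1 h2 => _root_.le_antisymm h1 h2⟩) le_refl max_choice
    (fun _ _ _ => max_le_iff)

private lemma perm_max? {l l' : List ℝ} (h : l ~ l') : l.max? = l'.max? := by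
  cases hl : l.max? with
  | none =>
    rw [List.max?_eq_none_iff] at hl
    subst hl
    rw [List.perm_nil.mp h.symm]
    rfl
  | some m =>
    obtain ⟨hm, hb⟩ := rmax_iff.mp hl
    exact (rmax_iff.mpr ⟨h.mem_iff.mp hm, fun b hb' => hb b (h.mem_iff.mpr hb')⟩).symm

private lemma mbfStep_large {A : List ℝ} {a : ℕ} {y : ℝ} (hy : 1 / 2 < y) :
    mbfStep (A, a) y = (y :: A, a + 1) := by
  simp only [mbfStep, if_pos hy]

private lemma mbfStep_small_some {A : List ℝ} {a : ℕ} {y m : ℝ} (hy : ¬ 1 / 2 < y)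
    (hF : (A.filter (fun z => decide (z + y ≤ 1))).max? = some m) :
    mbfStep (A, a) y = (A.erase m, a) := by
  simp only [mbfStep, if_neg hy]
  rw [hF]

private lemma mbfStep_small_none {A : List ℝ} {a : ℕ} {y : ℝ} (hy : ¬ 1 / 2 < y)
    (hF : (A.filter (fun z => decide (z + y ≤ 1))).max? = none) :
    mbfStep (A, a) y = (A, a + 1) := by
  simp only [mbfStep, if_neg hy]
  rw [hF]

/-- The invariant relating the state of the run without the extra item to the state of
the run with the extra item: either the open bins agree and the first cost is at most
the second, or the second run has exactly one extra open bin and its cost exceeds the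
first by at least one, or the first run has exactly one extra open bin and its cost is
at most the second. -/
private abbrev MbfRel (s t : List ℝ × ℕ) : Prop :=
  (s.1 ~ t.1 ∧ s.2 ≤ t.2) ∨ (∃ u, t.1 ~ u :: s.1 ∧ s.2 + 1 ≤ t.2) ∨
    (∃ m, s.1 ~ m :: t.1 ∧ s.2 ≤ t.2)

private lemma MbfRel.le {s t : List ℝ × ℕ} (h : MbfRel s t) : s.2 ≤ t.2 := by
  rcases h with ⟨_, h⟩ | ⟨u, _, h⟩ | ⟨m, _, h⟩ <;> omega

private lemma mbf_rel_congr_right {s t t' : List ℝ × ℕ} (h : MbfRel s t) (hp : t.1 ~ t'.1)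
    (hc : t.2 = t'.2) : MbfRel s t' := by
  rcases h with ⟨h1, h2⟩ | ⟨u, h1, h2⟩ | ⟨m, h1, h2⟩
  · exact Or.inl ⟨h1.trans hp, hc ▸ h2⟩
  · exact Or.inr (Or.inl ⟨u, hp.symm.trans h1, hc ▸ h2⟩)
  · exact Or.inr (Or.inr ⟨m, h1.trans (hp.cons m), hc ▸ h2⟩)

private lemma mbf_rel_congr_left {s s' t : List ℝ × ℕ} (h : MbfRel s t) (hp : s'.1 ~ s.1)
    (hc : s'.2 = s.2) : MbfRel s' t := by
  rcases h with ⟨h1, h2⟩ | ⟨u, h1, h2⟩ | ⟨m, h1, h2⟩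
  · exact Or.inl ⟨hp.trans h1, hc ▸ h2⟩
  · exact Or.inr (Or.inl ⟨u, h1.trans ((hp.cons u).symm), hc ▸ h2⟩)
  · exact Or.inr (Or.inr ⟨m, hp.trans h1, hc ▸ h2⟩)

/-- `mbfStep` is compatible with permutation of the open-bin list; moreover the cost
increment does not depend on the starting cost. -/
private lemma step_perm {A B : List ℝ} (h : A ~ B) (y : ℝ) (a b : ℕ) :
    (mbfStep (A, a) y).1 ~ (mbfStep (B, b) y).1 ∧
      ∃ d, (mbfStep (A, a) y).2 = a + d ∧ (mbfStep (B, b) y).2 = b + d := by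
  by_cases hy : 1 / 2 < y
  · rw [mbfStep_large hy, mbfStep_large hy]
    exact ⟨h.cons y, 1, rfl, rfl⟩
  · have hf : (A.filter (fun z => decide (z + y ≤ 1))).max? =
        (B.filter (fun z => decide (z + y ≤ 1))).max? :=
      perm_max? (h.filter _)
    cases hF : (A.filter (fun z => decide (z + y ≤ 1))).max? with
    | none =>
      rw [mbfStep_small_none hy hF, mbfStep_small_none hy (hf ▸ hF)]
      exact ⟨h, 1, rfl, rfl⟩
    | some m =>
      rw [mbfStep_small_some hy hF, mbfStep_small_some hy (hf ▸ hF)]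
      exact ⟨h.erase m, 0, rfl, rfl⟩

/-- Core case: the second run has one extra open bin `u` and cost lead at least one. -/
private lemma step_cons_right (u y : ℝ) (A : List ℝ) (a b : ℕ) (hab : a + 1 ≤ b) :
    MbfRel (mbfStep (A, a) y) (mbfStep (u :: A, b) y) := by
  by_cases hy : 1 / 2 < y
  · rw [mbfStep_large hy, mbfStep_large hy]
    exact Or.inr (Or.inl ⟨u, List.Perm.swap u y A, by omega⟩)
  · set p : ℝ → Bool := fun z => decide (z + y ≤ 1) with hp
    by_cases hu : u + y ≤ 1
    · have hf : (u :: A).filter p = u :: A.filter p := by simp [hp, hu]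
      cases hF : (A.filter p).max? with
      | none =>
        have hA0 : A.filter p = [] := List.max?_eq_none_iff.mp hF
        have hFB : ((u :: A).filter p).max? = some u := by
          rw [hf, hA0]; rfl
        rw [mbfStep_small_none hy hF, mbfStep_small_some hy hFB,
          List.erase_cons_head]
        exact Or.inl ⟨List.Perm.refl A, hab⟩
      | some m =>
        have hmA : m ∈ A := by
          have := (rmax_iff.mp hF).1
          exact (List.mem_filter.mp this).1
        have hFB : ((u :: A).filter p).max? = some (max u m) := by
          rw [hf, List.max?_cons, hF]; rfl
        rw [mbfStep_small_some hy hF, mbfStep_small_some hy hFB]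
        rcases max_choice u m with hc | hc
        · rw [hc, List.erase_cons_head]
          exact Or.inr (Or.inl ⟨m, List.perm_cons_erase hmA, hab⟩)
        · rw [hc]
          by_cases hmu : m = u
          · subst hmu
            rw [List.erase_cons_head]
            exact Or.inr (Or.inl ⟨m, List.perm_cons_erase hmA, hab⟩)
          · rw [List.erase_cons_tail (by simpa using Ne.symm hmu)]
            exact Or.inr (Or.inl ⟨u, List.Perm.refl _, hab⟩)
    · have hf : (u :: A).filter p = A.filter p := by simp [hp, hu]
      cases hF : (A.filter p).max? with
      | none =>
        rw [mbfStep_small_none hy hF, mbfStep_small_none hy (hf ▸ hF)]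
        exact Or.inr (Or.inl ⟨u, List.Perm.refl _, by omega⟩)
      | some m =>
        have hm1 : m + y ≤ 1 := by
          have := (rmax_iff.mp hF).1
          simpa [hp] using (List.mem_filter.mp this).2
        have hmu : m ≠ u := fun h => hu (h ▸ hm1)
        rw [mbfStep_small_some hy hF, mbfStep_small_some hy (hf ▸ hF),
          List.erase_cons_tail (by simpa using Ne.symm hmu)]
        exact Or.inr (Or.inl ⟨u, List.Perm.refl _, hab⟩)

/-- Core case: the first run has one extra open bin `m₀`. -/
private lemma step_cons_left (m₀ y : ℝ) (B : List ℝ) (a b : ℕ) (hab : a ≤ b) :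
    MbfRel (mbfStep (m₀ :: B, a) y) (mbfStep (B, b) y) := by
  by_cases hy : 1 / 2 < y
  · rw [mbfStep_large hy, mbfStep_large hy]
    exact Or.inr (Or.inr ⟨m₀, List.Perm.swap m₀ y B, by omega⟩)
  · set p : ℝ → Bool := fun z => decide (z + y ≤ 1) with hp
    by_cases hm₀ : m₀ + y ≤ 1
    · have hf : (m₀ :: B).filter p = m₀ :: B.filter p := by simp [hp, hm₀]
      cases hF : (B.filter p).max? with
      | none =>
        have hB0 : B.filter p = [] := List.max?_eq_none_iff.mp hF
        have hFA : ((m₀ :: B).filter p).max? = some m₀ := by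
          rw [hf, hB0]; rfl
        rw [mbfStep_small_some hy hFA, mbfStep_small_none hy hF,
          List.erase_cons_head]
        exact Or.inl ⟨List.Perm.refl B, by omega⟩
      | some m =>
        have hmB : m ∈ B := by
          have := (rmax_iff.mp hF).1
          exact (List.mem_filter.mp this).1
        have hFA : ((m₀ :: B).filter p).max? = some (max m₀ m) := by
          rw [hf, List.max?_cons, hF]; rfl
        rw [mbfStep_small_some hy hFA, mbfStep_small_some hy hF]
        rcases max_choice m₀ m with hc | hc
        · rw [hc, List.erase_cons_head]
          exact Or.inr (Or.inr ⟨m, List.perm_cons_erase hmB, hab⟩)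
        · rw [hc]
          by_cases hmm : m = m₀
          · subst hmm
            rw [List.erase_cons_head]
            exact Or.inr (Or.inr ⟨m, List.perm_cons_erase hmB, hab⟩)
          · rw [List.erase_cons_tail (by simpa using Ne.symm hmm)]
            exact Or.inr (Or.inr ⟨m₀, List.Perm.refl _, hab⟩)
    · have hf : (m₀ :: B).filter p = B.filter p := by simp [hp, hm₀]
      cases hF : (B.filter p).max? with
      | none =>
        rw [mbfStep_small_none hy (hf ▸ hF), mbfStep_small_none hy hF]
        exact Or.inr (Or.inr ⟨m₀, List.Perm.refl _, by omega⟩)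
      | some m =>
        have hm1 : m + y ≤ 1 := by
          have := (rmax_iff.mp hF).1
          simpa [hp] using (List.mem_filter.mp this).2
        have hmm : m ≠ m₀ := fun h => hm₀ (h ▸ hm1)
        rw [mbfStep_small_some hy (hf ▸ hF), mbfStep_small_some hy hF,
          List.erase_cons_tail (by simpa using Ne.symm hmm)]
        exact Or.inr (Or.inr ⟨m₀, List.Perm.refl _, hab⟩)

/-- The invariant is preserved by one step of Matching Best Fit. -/
private lemma step_rel {s t : List ℝ × ℕ} (y : ℝ) (h : MbfRel s t) :
    MbfRel (mbfStep s y) (mbfStep t y) := by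
  obtain ⟨A, a⟩ := s
  obtain ⟨B, b⟩ := t
  rcases h with ⟨h1, h2⟩ | ⟨u, h1, h2⟩ | ⟨m, h1, h2⟩ <;> dsimp only at h1 h2
  · obtain ⟨hperm, d, hd1, hd2⟩ := step_perm h1 y a b
    exact Or.inl ⟨hperm, by omega⟩
  · -- B ~ u :: A
    have hcore := step_cons_right u y A a b h2
    obtain ⟨hperm, d, hd1, hd2⟩ := step_perm h1 y b b
    exact mbf_rel_congr_right hcore hperm.symm (by omega)
  · -- A ~ m :: B
    have hcore := step_cons_left m y B a b h2
    obtain ⟨hperm, d, hd1, hd2⟩ := step_perm h1 y a a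
    exact mbf_rel_congr_left hcore hperm (by omega)

private lemma rel_foldl (l : List ℝ) {s t : List ℝ × ℕ} (h : MbfRel s t) :
    MbfRel (l.foldl mbfStep s) (l.foldl mbfStep t) := by
  induction l generalizing s t with
  | nil => exact h
  | cons y l ih => exact ih (step_rel y h)

private lemma rel_init (s : List ℝ × ℕ) (x : ℝ) : MbfRel s (mbfStep s x) := by
  obtain ⟨A, a⟩ := s
  by_cases hx : 1 / 2 < x
  · rw [mbfStep_large hx]
    exact Or.inr (Or.inl ⟨x, List.Perm.refl _, le_refl _⟩)
  · cases hF : (A.filter (fun z => decide (z + x ≤ 1))).max? with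
    | none =>
      rw [mbfStep_small_none hx hF]
      exact Or.inl ⟨List.Perm.refl _, by omega⟩
    | some m =>
      have hmA : m ∈ A := by
        have := (rmax_iff.mp hF).1
        exact (List.mem_filter.mp this).1
      rw [mbfStep_small_some hx hF]
      exact Or.inr (Or.inr ⟨m, List.perm_cons_erase hmA, le_refl _⟩)

/-- Matching Best Fit is monotone: removing one item from a sequence of items with
sizes in (0,1] does not increase the number of bins it opens. -/
theorem mbf_monotone (l₁ l₂ : List ℝ) (x : ℝ)
    (h : ∀ y ∈ l₁ ++ x :: l₂, 0 < y ∧ y ≤ 1) :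
    mbfCost (l₁ ++ l₂) ≤ mbfCost (l₁ ++ x :: l₂) := by
  unfold mbfCost
  rw [List.foldl_append, List.foldl_append, List.foldl_cons]
  exact (rel_foldl l₂ (rel_init (l₁.foldl mbfStep ([], 0)) x)).le

end Aux
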